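/- The map x ↦ Δ(x) is norm-continuous on the set of nonzero positive bounded operators: if x_n are positive, x is positive and nonzero, and ‖x_n − x‖ → 0, then Δ(x_n) → Δ(x). -/
import Mathlib


variable {H : Type*} [NormedAddCommGroup H] [InnerProductSpace ℂ H] [CompleteSpace H]

/-- Michelson contrast / centrality measure for operators. -/
noncomputable def Delta (x : H →L[ℂ] H) : ℝ :=
  ⨅ A : {A : ℝ // 0 < A}, ‖(1 : H →L[ℂ] H) - (A.1)⁻¹ • x‖

lemma delta_bdd (x : H →L[ℂ] H) :
    BddBelow (Set.range fun A : {A : ℝ // 0 < A} => ‖(1 : H →L[ℂ] H) - (A.1)⁻¹ • x‖) :=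
  ⟨0, by rintro r ⟨A, rfl⟩; positivity⟩

lemma delta_le (x : H →L[ℂ] H) (A : ℝ) (hA : 0 < A) :
    Delta x ≤ ‖(1 : H →L[ℂ] H) - A⁻¹ • x‖ :=
  ciInf_le (delta_bdd x) ⟨A, hA⟩

lemma delta_le_one (x : H →L[ℂ] H) : Delta x ≤ 1 := by
  refine le_of_forall_pos_le_add fun ε hε => ?_
  set A : ℝ := ‖x‖ / ε + 1 with hAdef
  have hApos : 0 < A := by positivity
  have hsmul : ‖A⁻¹ • x‖ = A⁻¹ * ‖x‖ := by
    rw [norm_smul, Real.norm_eq_abs, abs_of_pos (inv_pos.2 hApos)]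
  have hεA : A⁻¹ * ‖x‖ ≤ ε := by
    rw [inv_mul_eq_div, div_le_iff₀ hApos, hAdef]
    have : ε * (‖x‖ / ε) = ‖x‖ := by field_simp
    nlinarith [norm_nonneg x]
  calc Delta x ≤ ‖(1 : H →L[ℂ] H) - A⁻¹ • x‖ := delta_le x A hApos
    _ ≤ ‖(1 : H →L[ℂ] H)‖ + ‖A⁻¹ • x‖ := norm_sub_le _ _
    _ ≤ 1 + ε := by
        have h1 : ‖(1 : H →L[ℂ] H)‖ ≤ 1 := ContinuousLinearMap.norm_id_le
        rw [hsmul] at *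
        linarith

set_option synthInstance.maxHeartbeats 800000 in
lemma delta_lip [Nontrivial H] (y u v : H →L[ℂ] H) (hy : 0 < ‖y‖)
    (hu : ‖y‖ / 2 ≤ ‖u‖) (hv : ‖y‖ / 2 ≤ ‖v‖) :
    Delta u ≤ Delta v + 4 / ‖y‖ * ‖u - v‖ := by
  have h1 : ∀ A : {A : ℝ // 0 < A},
      Delta u - 4 / ‖y‖ * ‖u - v‖ ≤ ‖(1 : H →L[ℂ] H) - (A.1)⁻¹ • v‖ := by
    rintro ⟨A, hA⟩
    simp only
    by_cases hcase : ‖y‖ / 4 ≤ A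
    · have step := delta_le u A hA
      have hsplit : (1 : H →L[ℂ] H) - A⁻¹ • u
          = ((1 : H →L[ℂ] H) - A⁻¹ • v) - A⁻¹ • (u - v) := by
        rw [smul_sub]; abel
      have htri : ‖(1 : H →L[ℂ] H) - A⁻¹ • u‖
          ≤ ‖(1 : H →L[ℂ] H) - A⁻¹ • v‖ + A⁻¹ * ‖u - v‖ := by
        rw [hsplit]
        refine (norm_sub_le _ _).trans ?_
        rw [norm_smul, Real.norm_eq_abs, abs_of_pos (inv_pos.2 hA)]
      have hAinv : A⁻¹ ≤ 4 / ‖y‖ := by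
        rw [inv_eq_one_div, div_le_div_iff₀ hA hy]
        linarith
      have hmul : A⁻¹ * ‖u - v‖ ≤ 4 / ‖y‖ * ‖u - v‖ :=
        mul_le_mul_of_nonneg_right hAinv (norm_nonneg _)
      linarith
    · push_neg at hcase
      have hid : ‖(1 : H →L[ℂ] H)‖ = 1 := ContinuousLinearMap.norm_id
      have hlow : A⁻¹ * ‖v‖ - 1 ≤ ‖(1 : H →L[ℂ] H) - A⁻¹ • v‖ := by
        have h2 : ‖A⁻¹ • v‖ - ‖(1 : H →L[ℂ] H)‖ ≤ ‖A⁻¹ • v - 1‖ :=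
          norm_sub_norm_le _ _
        rw [norm_sub_rev, hid, norm_smul, Real.norm_eq_abs,
          abs_of_pos (inv_pos.2 hA)] at h2
        exact h2
      have h2le : 2 ≤ A⁻¹ * ‖v‖ := by
        rw [inv_mul_eq_div, le_div_iff₀ hA]
        linarith
      have hone := delta_le_one u
      have hk : 0 ≤ 4 / ‖y‖ * ‖u - v‖ := by positivity
      linarith
  have := le_ciInf h1
  have hDv : Delta u - 4 / ‖y‖ * ‖u - v‖ ≤ Delta v := this
  linarith

theorem delta_continuous (x : ℕ → (H →L[ℂ] H)) (y : H →L[ℂ] H)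
    (hx : ∀ n, (x n).IsPositive) (hy : y.IsPositive) (hne : y ≠ 0)
    (hconv : Filter.Tendsto (fun n => ‖x n - y‖) Filter.atTop (nhds 0)) :
    Filter.Tendsto (fun n => Delta (x n)) Filter.atTop (nhds (Delta y)) := by
  have hyn : 0 < ‖y‖ := norm_pos_iff.2 hne
  obtain ⟨a, ha⟩ : ∃ a, y a ≠ 0 := by
    by_contra h
    push_neg at h
    exact hne (ContinuousLinearMap.ext fun a => by simp [h a])
  have : Nontrivial H := nontrivial_of_ne (y a) 0 ha
  rw [← tendsto_sub_nhds_zero_iff]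
  have hglim : Filter.Tendsto (fun n => 4 / ‖y‖ * ‖x n - y‖) Filter.atTop (nhds 0) := by
    have := hconv.const_mul (4 / ‖y‖)
    simpa using this
  refine squeeze_zero_norm' ?_ hglim
  have hev : ∀ᶠ n in Filter.atTop, ‖x n - y‖ < ‖y‖ / 2 :=
    hconv.eventually_lt_const (by positivity)
  filter_upwards [hev] with n hn
  have hxn : ‖y‖ / 2 ≤ ‖x n‖ := by
    have := norm_sub_norm_le y (x n)
    rw [norm_sub_rev] at this
    linarith
  have hle1 := delta_lip y (x n) y hyn hxn (by linarith)
  have hle2 := delta_lip y y (x n) hyn (by linarith) hxn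
  rw [norm_sub_rev (y : H →L[ℂ] H) (x n)] at hle2
  rw [Real.norm_eq_abs, abs_sub_le_iff]
  constructor <;> linarith
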